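/- Let X, Y be metric spaces, w a weight on X, and φ: [0,∞) → [0,∞) a function. Suppose there exists M > 0 such that for all x, y ∈ X there is a rectifiable curve γ joining x and y with ∫_γ w ≤ M·φ(d_X(x,y)). Then every mapping f: X → Y satisfying D*f(z) ≤ C·w(z) for all z ∈ X (with constant C) satisfies d_Y(f(x), f(y)) ≤ M·C·φ(d_X(x,y)) for all x, y ∈ X; that is, ‖f‖_{Λ_φ} ≤ M·‖f‖_{B_w}. -/

import Mathlib

open Set Filter Metric ENNReal NNReal

/-- `D* f x`: upper dilation of `f` at `x` (0 at isolated points). -/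
noncomputable def Dstar {X Y : Type*} [MetricSpace X] [MetricSpace Y] (f : X → Y) (x : X) :
    ℝ≥0∞ :=
  Filter.limsup (fun y => edist (f x) (f y) / edist x y) (nhdsWithin x {x}ᶜ)

/-- A curve parametrized on `[0,1]` joining `x` to `y`. -/
def IsCurveFrom {X : Type*} [MetricSpace X] (γ : ℝ → X) (x y : X) : Prop :=
  ContinuousOn γ (Set.Icc 0 1) ∧ γ 0 = x ∧ γ 1 = y

/-- Rectifiability of a curve parametrized on `[0,1]`. -/
def RectifiableCurve {X : Type*} [MetricSpace X] (γ : ℝ → X) : Prop :=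
  eVariationOn γ (Set.Icc 0 1) ≠ ⊤

/-- `I` is the curve integral of `g` along `γ : [0,1] → X` (limit of Riemann sums with respect
to arclength). -/
def IsCurveIntegral {X : Type*} [MetricSpace X] (γ : ℝ → X) (g : X → ℝ) (I : ℝ) : Prop :=
  ∀ ε > 0, ∃ δ > 0, ∀ n : ℕ, ∀ t s : ℕ → ℝ,
    0 < n → t 0 = 0 → t n = 1 →
    (∀ i < n, t i < t (i + 1)) →
    (∀ i < n, t (i + 1) - t i < δ) →
    (∀ i < n, s i ∈ Set.Icc (t i) (t (i + 1))) →
    |I - ∑ i ∈ Finset.range n,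
        g (γ (s i)) * (eVariationOn γ (Set.Icc (t i) (t (i + 1)))).toReal| < ε

/-- The weighted distance `d_w`. -/
noncomputable def wDist {X : Type*} [MetricSpace X] (w : X → ℝ) (x y : X) : ℝ :=
  sInf {I | ∃ γ : ℝ → X, IsCurveFrom γ x y ∧ RectifiableCurve γ ∧ IsCurveIntegral γ w I}

/-- The inner (length) distance `d₁`. -/
noncomputable def innerDist {Y : Type*} [MetricSpace Y] (u v : Y) : ℝ :=
  sInf {L | ∃ δ : ℝ → Y, IsCurveFrom δ u v ∧ eVariationOn δ (Set.Icc 0 1) = ENNReal.ofReal L}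

lemma dstar_loc {X Y : Type*} [MetricSpace X] [MetricSpace Y] (f : X → Y) (z : X) (L : ℝ)
    (h : Dstar f z < ENNReal.ofReal L) :
    ∀ᶠ y in nhds z, edist (f z) (f y) ≤ ENNReal.ofReal L * edist z y := by
  have h1 : ∀ᶠ y in nhdsWithin z {z}ᶜ,
      edist (f z) (f y) / edist z y < ENNReal.ofReal L :=
    Filter.eventually_lt_of_limsup_lt h
  rw [eventually_nhdsWithin_iff] at h1
  filter_upwards [h1] with y hy
  by_cases hyz : y = z
  · simp [hyz]
  · have h2 := hy (by simpa using hyz)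
    have hz0 : edist z y ≠ 0 := (edist_pos.2 (Ne.symm hyz)).ne'
    exact le_of_lt ((ENNReal.div_lt_iff (Or.inl hz0) (Or.inl (edist_ne_top z y))).1 h2)

lemma Icc_add_Icc' {X : Type*} [MetricSpace X] (γ : ℝ → X) {a b c : ℝ}
    (hab : a ≤ b) (hbc : b ≤ c) :
    eVariationOn γ (Set.Icc a b) + eVariationOn γ (Set.Icc b c)
      = eVariationOn γ (Set.Icc a c) := by
  have := eVariationOn.Icc_add_Icc γ (s := Set.univ) hab hbc (Set.mem_univ b)
  simpa using this

lemma lemA {X Y : Type*} [MetricSpace X] [MetricSpace Y] (f : X → Y) (γ : ℝ → X)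
    {a b : ℝ} (hab : a ≤ b) (hγ : ContinuousOn γ (Set.Icc a b)) {L : ℝ}
    (hL : ∀ t ∈ Set.Icc a b, Dstar f (γ t) < ENNReal.ofReal L) :
    edist (f (γ a)) (f (γ b)) ≤ ENNReal.ofReal L * eVariationOn γ (Set.Icc a b) := by
  set S : Set ℝ := {t | t ∈ Set.Icc a b ∧
    edist (f (γ a)) (f (γ t)) ≤ ENNReal.ofReal L * eVariationOn γ (Set.Icc a t)} with hS
  have haS : a ∈ S := ⟨⟨le_rfl, hab⟩, by simp⟩
  have hbdd : BddAbove S := ⟨b, fun t ht => ht.1.2⟩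
  set T := sSup S with hT
  have hTa : a ≤ T := le_csSup hbdd haS
  have hTb : T ≤ b := csSup_le ⟨a, haS⟩ (fun t ht => ht.1.2)
  have hTmem : T ∈ Set.Icc a b := ⟨hTa, hTb⟩
  -- local bound near γ T, pulled back along γ
  have hev : ∀ᶠ t in nhdsWithin T (Set.Icc a b),
      edist (f (γ T)) (f (γ t)) ≤ ENNReal.ofReal L * edist (γ T) (γ t) :=
    (hγ T hTmem).eventually (dstar_loc f (γ T) L (hL T hTmem))
  rw [eventually_iff, Metric.mem_nhdsWithin_iff] at hev
  obtain ⟨η, hη, hball⟩ := hev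
  -- Step 1 : T ∈ S
  have hTS : T ∈ S := by
    obtain ⟨t, htS, ht⟩ : ∃ t ∈ S, T - η < t :=
      exists_lt_of_lt_csSup ⟨a, haS⟩ (by linarith)
    have htT : t ≤ T := le_csSup hbdd htS
    have hmemball : t ∈ Metric.ball T η ∩ Set.Icc a b := by
      refine ⟨?_, htS.1⟩
      rw [Metric.mem_ball, Real.dist_eq, abs_lt]
      constructor <;> linarith
    have hloc := hball hmemball
    refine ⟨hTmem, ?_⟩
    calc edist (f (γ a)) (f (γ T))
        ≤ edist (f (γ a)) (f (γ t)) + edist (f (γ t)) (f (γ T)) := edist_triangle _ _ _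
      _ ≤ ENNReal.ofReal L * eVariationOn γ (Set.Icc a t)
          + ENNReal.ofReal L * edist (γ t) (γ T) := by
            exact add_le_add htS.2 (by simpa [edist_comm] using hloc)
      _ ≤ ENNReal.ofReal L * eVariationOn γ (Set.Icc a t)
          + ENNReal.ofReal L * eVariationOn γ (Set.Icc t T) := by
            gcongr
            exact eVariationOn.edist_le γ ⟨le_rfl, htT⟩ ⟨htT, le_rfl⟩
      _ = ENNReal.ofReal L * eVariationOn γ (Set.Icc a T) := by
            rw [← mul_add, Icc_add_Icc' γ htS.1.1 htT]
  -- Step 2 : T = b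
  have hTeq : T = b := by
    by_contra hne
    have hTltb : T < b := lt_of_le_of_ne hTb hne
    set t' := min b (T + η / 2) with ht'
    have hTt' : T < t' := lt_min hTltb (by linarith)
    have ht'b : t' ≤ b := min_le_left _ _
    have ht'mem : t' ∈ Set.Icc a b := ⟨le_trans hTa hTt'.le, ht'b⟩
    have hmemball : t' ∈ Metric.ball T η ∩ Set.Icc a b := by
      refine ⟨?_, ht'mem⟩
      rw [Metric.mem_ball, Real.dist_eq, abs_lt]
      have : t' ≤ T + η / 2 := min_le_right _ _
      constructor <;> linarith
    have hloc := hball hmemball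
    have ht'S : t' ∈ S := by
      refine ⟨ht'mem, ?_⟩
      calc edist (f (γ a)) (f (γ t'))
          ≤ edist (f (γ a)) (f (γ T)) + edist (f (γ T)) (f (γ t')) := edist_triangle _ _ _
        _ ≤ ENNReal.ofReal L * eVariationOn γ (Set.Icc a T)
            + ENNReal.ofReal L * edist (γ T) (γ t') := add_le_add hTS.2 (by simpa using hloc)
        _ ≤ ENNReal.ofReal L * eVariationOn γ (Set.Icc a T)
            + ENNReal.ofReal L * eVariationOn γ (Set.Icc T t') := by
              gcongr
              exact eVariationOn.edist_le γ ⟨le_rfl, hTt'.le⟩ ⟨hTt'.le, le_rfl⟩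
        _ = ENNReal.ofReal L * eVariationOn γ (Set.Icc a t') := by
              rw [← mul_add, Icc_add_Icc' γ hTa hTt'.le]
    exact absurd (le_csSup hbdd ht'S) (not_le.2 hTt')
  rw [← hTeq]
  exact hTS.2

lemma sum_variation {X : Type*} [MetricSpace X] (γ : ℝ → X) :
    ∀ (n : ℕ) (t : ℕ → ℝ), (∀ i < n, t i ≤ t (i + 1)) →
    ∑ i ∈ Finset.range n, eVariationOn γ (Set.Icc (t i) (t (i + 1)))
      = eVariationOn γ (Set.Icc (t 0) (t n)) := by
  intro n
  induction n with
  | zero =>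
      intro t _
      simp [eVariationOn.subsingleton γ (by simp [Set.Icc_self] : (Set.Icc (t 0) (t 0)).Subsingleton)]
  | succ n ih =>
      intro t ht
      have h0n : t 0 ≤ t n := by
        clear ih
        induction n with
        | zero => exact le_rfl
        | succ m ihm =>
            exact le_trans (ihm (fun i hi => ht i (by omega))) (ht m (by omega))
      rw [Finset.sum_range_succ, ih t (fun i hi => ht i (by omega)),
        Icc_add_Icc' γ h0n (ht n (by omega))]


/-- The class `RO^K_w(X,Y)` of regularly oscillating mappings. -/
def RegOsc {X Y : Type*} [MetricSpace X] [MetricSpace Y] (w : X → ℝ) (K : ℝ) (f : X → Y) :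
    Prop :=
  (∀ x, Dstar f x ≠ ⊤) ∧
  (∀ x : X, ∀ r : ℝ, 0 < r → r < w x → Bornology.IsBounded (f '' Metric.ball x r)) ∧
  (∀ x : X, ∀ r : ℝ, 0 < r → r < w x →
    Dstar f x ≤ ENNReal.ofReal ((K / r) * ⨆ y : Metric.ball x r, dist (f x) (f y)))


private theorem bloch_main {X Y : Type*} [MetricSpace X] [MetricSpace Y]
    (w : X → ℝ) (hwc : Continuous w) (hwpos : ∀ x, 0 < w x)
    (φ : ℝ → ℝ) (hφnn : ∀ t ≥ (0:ℝ), 0 ≤ φ t)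
    (M : ℝ) (hM : 0 < M)
    (hcurve : ∀ x y : X, ∃ γ : ℝ → X, ∃ I : ℝ,
      (ContinuousOn γ (Set.Icc 0 1) ∧ γ 0 = x ∧ γ 1 = y) ∧
      eVariationOn γ (Set.Icc 0 1) ≠ ⊤ ∧
      (∀ ε > 0, ∃ δ > 0, ∀ n : ℕ, ∀ t s : ℕ → ℝ,
        0 < n → t 0 = 0 → t n = 1 →
        (∀ i < n, t i < t (i + 1)) →
        (∀ i < n, t (i + 1) - t i < δ) →
        (∀ i < n, s i ∈ Set.Icc (t i) (t (i + 1))) →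
        |I - ∑ i ∈ Finset.range n,
            w (γ (s i)) * (eVariationOn γ (Set.Icc (t i) (t (i + 1)))).toReal| < ε) ∧
      I ≤ M * φ (dist x y))
    (f : X → Y) (C : ℝ) (hC : 0 ≤ C)
    (hB : ∀ z, Dstar f z ≤ ENNReal.ofReal (C * w z)) :
    ∀ x y, dist (f x) (f y) ≤ M * C * φ (dist x y) := by
  intro x y
  obtain ⟨γ, I, ⟨hγc, hγ0, hγ1⟩, hrect, hint, hIle⟩ := hcurve x y
  set V := eVariationOn γ (Set.Icc (0:ℝ) 1) with hVdef
  set Vr := V.toReal with hVrdef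
  have hVr : 0 ≤ Vr := ENNReal.toReal_nonneg
  have key : dist (f x) (f y) ≤ C * I := by
    refine le_of_forall_pos_le_add ?_
    intro ε hε
    set ε₁ := ε / (C + Vr + 1) with hε₁def
    have hden : 0 < C + Vr + 1 := by linarith
    have hε₁ : 0 < ε₁ := div_pos hε hden
    obtain ⟨δ₁, hδ₁, hint'⟩ := hint ε₁ hε₁
    have hgc : ContinuousOn (fun s : ℝ => C * w (γ s)) (Set.Icc 0 1) :=
      (continuous_const.mul hwc).comp_continuousOn hγc
    have huc := isCompact_Icc.uniformContinuousOn_of_continuous hgc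
    rw [Metric.uniformContinuousOn_iff] at huc
    obtain ⟨δ₂, hδ₂, hδ₂p⟩ := huc ε₁ hε₁
    obtain ⟨n, hn⟩ := exists_nat_gt (max (max (1 / δ₁) (1 / δ₂)) 0)
    have hn0 : 0 < (n : ℝ) := lt_of_le_of_lt (le_max_right _ _) hn
    have hnpos : 0 < n := by exact_mod_cast hn0
    have h1δ₁ : 1 / (n : ℝ) < δ₁ := by
      rw [div_lt_iff₀ hn0]
      have h1 : 1 / δ₁ < n := lt_of_le_of_lt ((le_max_left _ _).trans (le_max_left _ _)) hn
      rw [div_lt_iff₀ hδ₁] at h1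
      linarith [mul_comm δ₁ (n:ℝ)]
    have h1δ₂ : 1 / (n : ℝ) < δ₂ := by
      rw [div_lt_iff₀ hn0]
      have h1 : 1 / δ₂ < n := lt_of_le_of_lt ((le_max_right _ _).trans (le_max_left _ _)) hn
      rw [div_lt_iff₀ hδ₂] at h1
      linarith [mul_comm δ₂ (n:ℝ)]
    set t : ℕ → ℝ := fun i => (i : ℝ) / n with htdef
    have ht0 : t 0 = 0 := by simp [htdef]
    have htn : t n = 1 := by rw [htdef]; exact div_self hn0.ne'
    have hstep : ∀ i, t (i + 1) - t i = 1 / n := by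
      intro i; simp only [htdef]; push_cast; ring
    have htlt : ∀ i < n, t i < t (i + 1) := by
      intro i _
      have := hstep i
      have : (0:ℝ) < 1 / n := by positivity
      linarith [hstep i]
    have htmem : ∀ i ≤ n, t i ∈ Set.Icc (0:ℝ) 1 := by
      intro i hi
      constructor
      · positivity
      · rw [div_le_one hn0]; exact_mod_cast hi
    have htmono : ∀ i < n, t i ≤ t (i + 1) := fun i hi => (htlt i hi).le
    -- Riemann sum estimate
    have hR := hint' n t t hnpos ht0 htn htlt
      (fun i _ => by rw [hstep i]; exact h1δ₁)
      (fun i hi => ⟨le_rfl, htmono i hi⟩)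
    set v : ℕ → ℝ := fun i => (eVariationOn γ (Set.Icc (t i) (t (i + 1)))).toReal with hvdef
    have hvnn : ∀ i, 0 ≤ v i := fun i => ENNReal.toReal_nonneg
    have hVine : ∀ i < n, eVariationOn γ (Set.Icc (t i) (t (i + 1))) ≠ ⊤ := by
      intro i hi
      refine ne_top_of_le_ne_top hrect (eVariationOn.mono γ ?_)
      exact Set.Icc_subset_Icc (htmem i (by omega)).1 (htmem (i+1) (by omega)).2
    set L : ℕ → ℝ := fun i => C * w (γ (t i)) + ε₁ with hLdef
    have hLnn : ∀ i < n, 0 ≤ L i := by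
      intro i hi
      have := (hwpos (γ (t i))).le
      have : 0 ≤ C * w (γ (t i)) := mul_nonneg hC this
      simp only [hLdef]; linarith
    -- per-piece estimate
    have hedge : ∀ i < n, edist (f (γ (t i))) (f (γ (t (i + 1))))
        ≤ ENNReal.ofReal (L i) * eVariationOn γ (Set.Icc (t i) (t (i + 1))) := by
      intro i hi
      refine lemA f γ (htmono i hi)
        (hγc.mono (Set.Icc_subset_Icc (htmem i (by omega)).1 (htmem (i+1) (by omega)).2)) ?_
      intro τ hτ
      have hτ01 : τ ∈ Set.Icc (0:ℝ) 1 :=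
        ⟨le_trans (htmem i (by omega)).1 hτ.1, le_trans hτ.2 (htmem (i+1) (by omega)).2⟩
      have hd : dist τ (t i) < δ₂ := by
        rw [Real.dist_eq, abs_lt]
        have := hstep i
        constructor <;> [linarith [hτ.1]; linarith [hτ.2, h1δ₂]]
      have hwd := hδ₂p τ hτ01 (t i) (htmem i (by omega)) hd
      rw [Real.dist_eq, abs_lt] at hwd
      have hlt : C * w (γ τ) < L i := by simp only [hLdef]; linarith [hwd.2]
      refine lt_of_le_of_lt (hB (γ τ)) ?_
      rw [ENNReal.ofReal_lt_ofReal_iff]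
      · exact hlt
      · exact lt_of_le_of_lt (mul_nonneg hC (hwpos (γ τ)).le) hlt
    -- telescoping
    have htel : edist (f x) (f y) ≤
        ∑ i ∈ Finset.range n, edist (f (γ (t i))) (f (γ (t (i + 1)))) := by
      have := edist_le_range_sum_edist (fun i => f (γ (t i))) n
      simpa [ht0, htn, hγ0, hγ1] using this
    have hsum : edist (f x) (f y) ≤
        ENNReal.ofReal (∑ i ∈ Finset.range n, L i * v i) := by
      rw [ENNReal.ofReal_sum_of_nonneg
        (fun i hi => mul_nonneg (hLnn i (Finset.mem_range.1 hi)) (hvnn i))]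
      refine htel.trans (Finset.sum_le_sum fun i hi => ?_)
      have hi' := Finset.mem_range.1 hi
      refine (hedge i hi').trans ?_
      rw [ENNReal.ofReal_mul (hLnn i hi'), ENNReal.ofReal_toReal (hVine i hi')]
    have hdist : dist (f x) (f y) ≤ ∑ i ∈ Finset.range n, L i * v i := by
      rw [edist_dist] at hsum
      exact (ENNReal.ofReal_le_ofReal_iff
        (Finset.sum_nonneg fun i hi =>
          mul_nonneg (hLnn i (Finset.mem_range.1 hi)) (hvnn i))).1 hsum
    -- compute the sum
    have hsumv : ∑ i ∈ Finset.range n, v i = Vr := by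
      rw [hvdef, ← ENNReal.toReal_sum (fun i hi => hVine i (Finset.mem_range.1 hi))]
      · congr 1
        rw [sum_variation γ n t htmono, ht0, htn]
    have hsplit : ∑ i ∈ Finset.range n, L i * v i
        = C * (∑ i ∈ Finset.range n, w (γ (t i)) * v i) + ε₁ * Vr := by
      rw [← hsumv, Finset.mul_sum, Finset.mul_sum, ← Finset.sum_add_distrib]
      refine Finset.sum_congr rfl fun i _ => ?_
      simp only [hLdef]; ring
    have hRiem : ∑ i ∈ Finset.range n, w (γ (t i)) * v i ≤ I + ε₁ := by
      have := abs_lt.1 hR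
      linarith [this.1]
    calc dist (f x) (f y) ≤ ∑ i ∈ Finset.range n, L i * v i := hdist
      _ = C * (∑ i ∈ Finset.range n, w (γ (t i)) * v i) + ε₁ * Vr := hsplit
      _ ≤ C * (I + ε₁) + ε₁ * Vr := by
          nlinarith [hRiem, hC, hε₁.le, hVr]
      _ = C * I + ε₁ * (C + Vr) := by ring
      _ ≤ C * I + ε := by
          have : ε₁ * (C + Vr + 1) = ε := by
            rw [hε₁def]; field_simp
          nlinarith [hε₁.le]
  calc dist (f x) (f y) ≤ C * I := key
    _ ≤ C * (M * φ (dist x y)) := mul_le_mul_of_nonneg_left hIle hC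
    _ = M * C * φ (dist x y) := by ring

theorem bloch_into_lipschitz {X Y : Type*} [MetricSpace X] [MetricSpace Y]
    (w : X → ℝ) (hwc : Continuous w) (hwpos : ∀ x, 0 < w x)
    (φ : ℝ → ℝ) (hφnn : ∀ t ≥ (0:ℝ), 0 ≤ φ t)
    (M : ℝ) (hM : 0 < M)
    (hcurve : ∀ x y : X, ∃ γ : ℝ → X, ∃ I : ℝ, IsCurveFrom γ x y ∧ RectifiableCurve γ ∧
      IsCurveIntegral γ w I ∧ I ≤ M * φ (dist x y))
    (f : X → Y) (C : ℝ) (hC : 0 ≤ C)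
    (hB : ∀ z, Dstar f z ≤ ENNReal.ofReal (C * w z)) :
    ∀ x y, dist (f x) (f y) ≤ M * C * φ (dist x y) := by
  refine bloch_main w hwc hwpos φ hφnn M hM ?_ f C hC hB
  intro x y
  obtain ⟨γ, I, h1, h2, h3, h4⟩ := hcurve x y
  exact ⟨γ, I, h1, h2, h3, h4⟩
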